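/- arXiv:2208.06783 — 2 statements merged into one kernel-verified Lean document; each statement's English description precedes it below -/
import Mathlib

section
/- For a scalar continuously differentiable function x : [0,∞) → ℝ and α ∈ (0,1), the Caputo derivative satisfies D^α(x²)(t) ≤ 2 x(t) D^α x(t) for all t ≥ 0. -/
noncomputable def caputo (α : ℝ) (f : ℝ → ℝ) (t : ℝ) : ℝ :=
  (1 / Real.Gamma (1 - α)) * ∫ τ in (0:ℝ)..t, deriv f τ * (t - τ) ^ (-α)

open MeasureTheory Set Filter Topology intervalIntegral

lemma caputo_key (α : ℝ) (hα : α ∈ Set.Ioo (0:ℝ) 1)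
    (x : ℝ → ℝ) (hx : ContDiff ℝ 1 x) {t : ℝ} (ht : 0 < t) :
    ∫ τ in (0:ℝ)..t, (x τ - x t) * deriv x τ * (t - τ) ^ (-α) ≤ 0 := by
  obtain ⟨hα0, hα1⟩ := hα
  have hxd : Differentiable ℝ x := hx.differentiable one_ne_zero
  have hx' : Continuous (deriv x) := hx.continuous_deriv le_rfl
  -- integrability of the weight
  have hw : IntervalIntegrable (fun τ => (t - τ) ^ (-α)) volume 0 t := by
    have h1 : IntervalIntegrable (fun u : ℝ => u ^ (-α)) volume 0 t :=
      intervalIntegral.intervalIntegrable_rpow' (by linarith)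
    have h2 := h1.comp_sub_left t
    simpa using h2.symm
  -- bound on the continuous factor
  have hcont : Continuous fun τ => (x τ - x t) * deriv x τ :=
    (hx.continuous.sub continuous_const).mul hx'
  obtain ⟨M, hM⟩ := isCompact_Icc.exists_bound_of_continuousOn
    (s := Icc (0:ℝ) t) hcont.continuousOn
  have hM' : ∀ τ ∈ Icc (0:ℝ) t, |(x τ - x t) * deriv x τ| ≤ max M 0 := fun τ hτ =>
    le_trans (hM τ hτ) (le_max_left _ _)
  -- integrability of g
  have hg_int : IntervalIntegrable
      (fun τ => (x τ - x t) * deriv x τ * (t - τ) ^ (-α)) volume 0 t := by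
    apply (hw.const_mul (max M 0)).mono_fun
    · exact (hcont.aestronglyMeasurable.mul
        (((measurable_const.sub measurable_id).pow measurable_const).aestronglyMeasurable)).restrict
    · rw [uIoc_of_le ht.le]
      filter_upwards [ae_restrict_mem measurableSet_Ioc] with τ hτ
      have hτ' : τ ∈ Icc (0:ℝ) t := Ioc_subset_Icc_self hτ
      have hwnn : (0:ℝ) ≤ (t - τ) ^ (-α) := Real.rpow_nonneg (by linarith [hτ'.2]) _
      have hMnn : (0:ℝ) ≤ max M 0 := le_max_right _ _
      calc ‖(x τ - x t) * deriv x τ * (t - τ) ^ (-α)‖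
          = |(x τ - x t) * deriv x τ| * ((t - τ) ^ (-α)) := by
            rw [Real.norm_eq_abs, abs_mul, abs_of_nonneg hwnn]
        _ ≤ max M 0 * ((t - τ) ^ (-α)) :=
            mul_le_mul_of_nonneg_right (hM' τ hτ') hwnn
        _ = ‖max M 0 * (t - τ) ^ (-α)‖ := by
            rw [Real.norm_eq_abs, abs_of_nonneg (mul_nonneg hMnn hwnn)]
  -- Lipschitz bound
  obtain ⟨L, hL⟩ := isCompact_Icc.exists_bound_of_continuousOn
    (s := Icc (0:ℝ) t) hx'.continuousOn
  have hlip : ∀ s ∈ Icc (0:ℝ) t, |x s - x t| ≤ L * (t - s) := by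
    intro s hs
    have h := Convex.norm_image_sub_le_of_norm_deriv_le (f := x)
      (fun τ _ => hxd τ) hL (convex_Icc 0 t) (right_mem_Icc.2 ht.le) hs
    rw [Real.norm_eq_abs, Real.norm_eq_abs, abs_sub_comm s t,
      abs_of_nonneg (by linarith [hs.2] : (0:ℝ) ≤ t - s)] at h
    exact h
  have hL0 : 0 ≤ L := le_trans (norm_nonneg _) (hL 0 (left_mem_Icc.2 ht.le))
  -- key estimate on [0, s] for s < t
  have key : ∀ s ∈ Ico (0:ℝ) t,
      (∫ τ in (0:ℝ)..s, (x τ - x t) * deriv x τ * (t - τ) ^ (-α))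
        ≤ 1/2 * L^2 * (t - s) ^ (2 - α) := by
    intro s hs
    obtain ⟨hs0, hst⟩ := hs
    have hderiv : ∀ τ ∈ Icc (0:ℝ) s,
        HasDerivAt (fun τ => 1/2 * (x τ - x t)^2 * (t - τ) ^ (-α))
          ((x τ - x t) * deriv x τ * (t - τ) ^ (-α)
            + α/2 * (x τ - x t)^2 * (t - τ) ^ (-α - 1)) τ := by
      intro τ hτ
      have htτ : 0 < t - τ := by linarith [hτ.2]
      have h1 : HasDerivAt (fun τ => (x τ - x t)^2)
          (2 * (x τ - x t) * deriv x τ) τ := by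
        have := (((hxd τ).hasDerivAt).sub_const (x t)).pow 2
        simpa [Pi.pow_def] using this
      have h0 : HasDerivAt (fun τ => 1/2 * (x τ - x t)^2)
          (1/2 * (2 * (x τ - x t) * deriv x τ)) τ := h1.const_mul (1/2 : ℝ)
      have h2 : HasDerivAt (fun τ => (t - τ) ^ (-α)) (α * (t - τ) ^ (-α - 1)) τ := by
        have hu : HasDerivAt (fun u : ℝ => u ^ (-α)) (-α * (t - τ) ^ (-α - 1)) (t - τ) :=
          Real.hasDerivAt_rpow_const (Or.inl htτ.ne')
        have hin : HasDerivAt (fun τ : ℝ => t - τ) (-1) τ := by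
          simpa using (hasDerivAt_id τ).const_sub t
        have := hu.comp τ hin
        simpa [Function.comp_def] using this.neg.neg
      have h3 : HasDerivAt (fun τ => 1/2 * (x τ - x t)^2 * (t - τ) ^ (-α)) _ τ := h0.mul h2
      convert h3 using 1
      ring
    have hφcont : ContinuousOn
        (fun τ => (x τ - x t) * deriv x τ * (t - τ) ^ (-α)
          + α/2 * (x τ - x t)^2 * (t - τ) ^ (-α - 1)) (Icc 0 s) := by
      have hwc : ∀ r : ℝ, ContinuousOn (fun τ => (t - τ) ^ r) (Icc (0:ℝ) s) := by
        intro r τ hτ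
        have htτ : 0 < t - τ := by linarith [hτ.2]
        exact ((Real.continuousAt_rpow_const _ r (Or.inl htτ.ne')).comp
          ((continuous_const.sub continuous_id).continuousAt)).continuousWithinAt
      exact (hcont.continuousOn.mul (hwc (-α))).add
        ((continuousOn_const.mul
          (((hx.continuous.sub continuous_const).pow 2).continuousOn)).mul (hwc (-α - 1)))
    have hφint : IntervalIntegrable
        (fun τ => (x τ - x t) * deriv x τ * (t - τ) ^ (-α)
          + α/2 * (x τ - x t)^2 * (t - τ) ^ (-α - 1)) volume 0 s :=
      (hφcont.mono (by rw [uIcc_of_le hs0])).intervalIntegrable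
    have hFTC : (∫ τ in (0:ℝ)..s, ((x τ - x t) * deriv x τ * (t - τ) ^ (-α)
          + α/2 * (x τ - x t)^2 * (t - τ) ^ (-α - 1)))
        = 1/2 * (x s - x t)^2 * (t - s) ^ (-α)
          - 1/2 * (x 0 - x t)^2 * (t - 0) ^ (-α) := by
      apply intervalIntegral.integral_eq_sub_of_hasDerivAt
      · intro τ hτ
        exact hderiv τ (by rwa [uIcc_of_le hs0] at hτ)
      · exact hφint
    have hgint' : IntervalIntegrable
        (fun τ => (x τ - x t) * deriv x τ * (t - τ) ^ (-α)) volume 0 s :=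
      hg_int.mono_set
        (by rw [uIcc_of_le hs0, uIcc_of_le ht.le]; exact Icc_subset_Icc le_rfl hst.le)
    have hmono : (∫ τ in (0:ℝ)..s, (x τ - x t) * deriv x τ * (t - τ) ^ (-α))
        ≤ ∫ τ in (0:ℝ)..s, ((x τ - x t) * deriv x τ * (t - τ) ^ (-α)
            + α/2 * (x τ - x t)^2 * (t - τ) ^ (-α - 1)) := by
      apply intervalIntegral.integral_mono_on hs0 hgint' hφint
      intro τ hτ
      have htτ : 0 < t - τ := by linarith [hτ.2]
      have hnn : 0 ≤ α/2 * (x τ - x t)^2 * (t - τ) ^ (-α - 1) := by positivity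
      linarith
    have hF0 : 0 ≤ 1/2 * (x 0 - x t)^2 * (t - 0) ^ (-α) := by
      have h0t : (0:ℝ) < t - 0 := by linarith
      positivity
    have hFs : 1/2 * (x s - x t)^2 * (t - s) ^ (-α) ≤ 1/2 * L^2 * (t - s) ^ (2 - α) := by
      have hts : 0 < t - s := by linarith
      have h1 : (x s - x t)^2 ≤ (L * (t - s))^2 := by
        have hl := hlip s ⟨hs0, hst.le⟩
        have habs : |x s - x t|^2 ≤ (L * (t-s))^2 := pow_le_pow_left₀ (abs_nonneg _) hl 2
        rwa [sq_abs] at habs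
      have hwpos : (0:ℝ) < (t - s) ^ (-α) := Real.rpow_pos_of_pos hts _
      calc 1/2 * (x s - x t)^2 * (t - s) ^ (-α)
          ≤ 1/2 * (L * (t - s))^2 * (t - s) ^ (-α) := by nlinarith
        _ = 1/2 * L^2 * ((t - s)^(2:ℕ) * (t - s) ^ (-α)) := by ring
        _ = 1/2 * L^2 * (t - s) ^ (2 - α) := by
            rw [← Real.rpow_natCast (t - s) 2, ← Real.rpow_add hts]
            congr 1
    calc (∫ τ in (0:ℝ)..s, (x τ - x t) * deriv x τ * (t - τ) ^ (-α))
        ≤ 1/2 * (x s - x t)^2 * (t - s) ^ (-α)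
          - 1/2 * (x 0 - x t)^2 * (t - 0) ^ (-α) := by rw [← hFTC]; exact hmono
      _ ≤ 1/2 * (x s - x t)^2 * (t - s) ^ (-α) := by linarith
      _ ≤ 1/2 * L^2 * (t - s) ^ (2 - α) := hFs
  -- limiting argument
  haveI hne : (𝓝[Ico (0:ℝ) t] t).NeBot := by
    rw [← mem_closure_iff_nhdsWithin_neBot, closure_Ico ht.ne]
    exact right_mem_Icc.2 ht.le
  have hprim : Tendsto (fun s => ∫ τ in (0:ℝ)..s, (x τ - x t) * deriv x τ * (t - τ) ^ (-α))
      (𝓝[Ico (0:ℝ) t] t)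
      (𝓝 (∫ τ in (0:ℝ)..t, (x τ - x t) * deriv x τ * (t - τ) ^ (-α))) := by
    have hc := intervalIntegral.continuousOn_primitive_interval'
      (μ := volume) (b₁ := (0:ℝ)) (b₂ := t) hg_int (left_mem_uIcc)
    have h2 := hc t (by rw [uIcc_of_le ht.le]; exact right_mem_Icc.2 ht.le)
    exact h2.mono_left (nhdsWithin_mono _ (by rw [uIcc_of_le ht.le]; exact Ico_subset_Icc_self))
  have hB : Tendsto (fun s => 1/2 * L^2 * (t - s) ^ (2 - α)) (𝓝[Ico (0:ℝ) t] t) (𝓝 0) := by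
    have h1 : Tendsto (fun s : ℝ => t - s) (𝓝 t) (𝓝 0) := by
      have hcts : Continuous (fun s : ℝ => t - s) := continuous_const.sub continuous_id
      simpa using hcts.tendsto t
    have h2 : Tendsto (fun u : ℝ => u ^ (2 - α)) (𝓝 0) (𝓝 0) := by
      have := (Real.continuousAt_rpow_const 0 (2 - α) (Or.inr (by linarith))).tendsto
      rwa [Real.zero_rpow (by linarith : (2:ℝ) - α ≠ 0)] at this
    have h3 := ((h2.comp h1).const_mul (1/2 * L^2)).mono_left
      (nhdsWithin_le_nhds (s := Ico (0:ℝ) t))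
    simpa using h3
  exact le_of_tendsto_of_tendsto hprim hB
    (Filter.eventually_of_mem self_mem_nhdsWithin key)

theorem caputo_sq_le (α : ℝ) (hα : α ∈ Set.Ioo (0:ℝ) 1)
    (x : ℝ → ℝ) (hx : ContDiff ℝ 1 x) :
    ∀ t, 0 ≤ t → caputo α (fun τ => (x τ) ^ 2) t ≤ 2 * x t * caputo α x t := by
  intro t ht0
  rcases eq_or_lt_of_le ht0 with h | ht
  · subst h
    simp [caputo]
  obtain ⟨hα0, hα1⟩ := hα
  have hxd : Differentiable ℝ x := hx.differentiable one_ne_zero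
  have hx' : Continuous (deriv x) := hx.continuous_deriv le_rfl
  have hΓpos : 0 < Real.Gamma (1 - α) := Real.Gamma_pos_of_pos (by linarith)
  have hc : 0 < 1 / Real.Gamma (1 - α) := by positivity
  -- derivative of x^2
  have hdsq : ∀ τ : ℝ, deriv (fun τ => (x τ)^2) τ = 2 * x τ * deriv x τ := by
    intro τ
    have := (((hxd τ).hasDerivAt).pow 2).deriv
    simpa [Pi.pow_def] using this
  -- integrability facts
  have hw : IntervalIntegrable (fun τ => (t - τ) ^ (-α)) volume 0 t := by
    have h1 : IntervalIntegrable (fun u : ℝ => u ^ (-α)) volume 0 t :=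
      intervalIntegral.intervalIntegrable_rpow' (by linarith)
    have h2 := h1.comp_sub_left t
    simpa using h2.symm
  have hint : ∀ f : ℝ → ℝ, Continuous f →
      IntervalIntegrable (fun τ => f τ * (t - τ) ^ (-α)) volume 0 t := by
    intro f hf
    obtain ⟨M, hM⟩ := isCompact_Icc.exists_bound_of_continuousOn
      (s := Icc (0:ℝ) t) hf.continuousOn
    apply (hw.const_mul (max M 0)).mono_fun
    · exact (hf.aestronglyMeasurable.mul
        (((measurable_const.sub measurable_id).pow measurable_const).aestronglyMeasurable)).restrict
    · rw [uIoc_of_le ht.le]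
      filter_upwards [ae_restrict_mem measurableSet_Ioc] with τ hτ
      have hτ' : τ ∈ Icc (0:ℝ) t := Ioc_subset_Icc_self hτ
      have hwnn : (0:ℝ) ≤ (t - τ) ^ (-α) := Real.rpow_nonneg (by linarith [hτ'.2]) _
      have hMnn : (0:ℝ) ≤ max M 0 := le_max_right _ _
      calc ‖f τ * (t - τ) ^ (-α)‖
          = |f τ| * ((t - τ) ^ (-α)) := by
            rw [Real.norm_eq_abs, abs_mul, abs_of_nonneg hwnn]
        _ ≤ max M 0 * ((t - τ) ^ (-α)) :=
            mul_le_mul_of_nonneg_right (le_trans (hM τ hτ') (le_max_left _ _)) hwnn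
        _ = ‖max M 0 * (t - τ) ^ (-α)‖ := by
            rw [Real.norm_eq_abs, abs_of_nonneg (mul_nonneg hMnn hwnn)]
  have hint1 : IntervalIntegrable (fun τ => 2 * x τ * deriv x τ * (t - τ) ^ (-α)) volume 0 t :=
    hint _ ((continuous_const.mul hx.continuous).mul hx')
  have hint2 : IntervalIntegrable (fun τ => 2 * x t * deriv x τ * (t - τ) ^ (-α)) volume 0 t :=
    hint _ (continuous_const.mul hx')
  -- rewrite goal
  unfold caputo
  have hkey := caputo_key α ⟨hα0, hα1⟩ x hx ht
  have heq1 : (∫ τ in (0:ℝ)..t, deriv (fun τ => (x τ)^2) τ * (t - τ) ^ (-α))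
      = ∫ τ in (0:ℝ)..t, 2 * x τ * deriv x τ * (t - τ) ^ (-α) := by
    apply intervalIntegral.integral_congr
    intro τ _
    simp only [hdsq]
  rw [heq1]
  rw [mul_comm (2 * x t), mul_assoc]
  apply mul_le_mul_of_nonneg_left _ hc.le
  have heq2 : (∫ τ in (0:ℝ)..t, deriv x τ * (t - τ) ^ (-α)) * (2 * x t)
      = ∫ τ in (0:ℝ)..t, 2 * x t * deriv x τ * (t - τ) ^ (-α) := by
    rw [mul_comm, ← intervalIntegral.integral_const_mul]
    apply intervalIntegral.integral_congr
    intro τ _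
    dsimp only
    ring
  rw [heq2]
  have hsub : (∫ τ in (0:ℝ)..t, 2 * x τ * deriv x τ * (t - τ) ^ (-α))
      - (∫ τ in (0:ℝ)..t, 2 * x t * deriv x τ * (t - τ) ^ (-α))
      = ∫ τ in (0:ℝ)..t, 2 * ((x τ - x t) * deriv x τ * (t - τ) ^ (-α)) := by
    rw [← intervalIntegral.integral_sub hint1 hint2]
    apply intervalIntegral.integral_congr
    intro τ _
    dsimp only
    ring
  have h2g : (∫ τ in (0:ℝ)..t, 2 * ((x τ - x t) * deriv x τ * (t - τ) ^ (-α))) ≤ 0 := by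
    rw [intervalIntegral.integral_const_mul]
    linarith
  linarith [hsub, h2g]
end

section
/- Let P ∈ ℝ^{n×n} be symmetric positive definite and x : [0,∞) → ℝⁿ continuously differentiable. Then for α ∈ (0,1), D^α(xᵀPx)(t) ≤ (D^α x(t))ᵀ P x(t) + x(t)ᵀ P D^α x(t) for all t ≥ 0, where D^α is the componentwise Caputo derivative. -/
open Matrix

open MeasureTheory intervalIntegral Set Filter Topology in
private lemma w_integrable' {α t : ℝ} (hα1 : α < 1) :
    IntervalIntegrable (fun τ => (t - τ) ^ (-α)) volume 0 t := by
  have h : IntervalIntegrable (fun τ : ℝ => τ ^ (-α)) volume 0 t :=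
    intervalIntegral.intervalIntegrable_rpow' (by linarith)
  simpa using (h.comp_sub_left t).symm

open MeasureTheory intervalIntegral Set Filter Topology in
private lemma key_nonpos {α t : ℝ} (hα0 : 0 < α) (hα1 : α < 1) (ht : 0 < t)
    (g g' : ℝ → ℝ) (hg : ∀ τ, HasDerivAt g (g' τ) τ) (hg'c : Continuous g')
    (hgnn : ∀ τ, 0 ≤ g τ) (hgt : g t = 0) :
    ∫ τ in (0:ℝ)..t, g' τ * (t - τ) ^ (-α) ≤ 0 := by
  have hg't : g' t = 0 := by
    have hmin : IsLocalMin g t := Filter.Eventually.of_forall fun τ => hgt ▸ hgnn τ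
    have := hmin.deriv_eq_zero
    rwa [(hg t).deriv] at this
  set w : ℝ → ℝ := fun τ => (t - τ) ^ (-α) with hw_def
  have hw : IntervalIntegrable w volume 0 t := w_integrable' hα1
  have hint : IntervalIntegrable (fun τ => g' τ * w τ) volume 0 t :=
    hw.continuousOn_mul hg'c.continuousOn
  set F : ℝ → ℝ := fun s => ∫ τ in (0:ℝ)..s, g' τ * w τ with hF_def
  have hFc : ContinuousOn F (Set.uIcc 0 t) :=
    continuousOn_primitive_interval' hint left_mem_uIcc
  have hsub : Ioo (0:ℝ) t ⊆ Set.uIcc 0 t := by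
    rw [Set.uIcc_of_le ht.le]; exact Ioo_subset_Icc_self
  have hFt : Tendsto F (𝓝[Ioo (0:ℝ) t] t) (𝓝 (F t)) :=
    ((hFc t (by rw [Set.uIcc_of_le ht.le]; exact right_mem_Icc.2 ht.le)).mono_left
      (nhdsWithin_mono t hsub))
  have hbound : ∀ s ∈ Ioo (0:ℝ) t, F s ≤ g s * (t - s) ^ (-α) := by
    intro s hs
    have hst : s < t := hs.2
    have hwd : ∀ x ∈ Set.uIcc (0:ℝ) s, HasDerivAt w (α * (t - x) ^ (-α - 1)) x := by
      intro x hx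
      rw [Set.uIcc_of_le hs.1.le] at hx
      have hxt : (0:ℝ) < t - x := by linarith [hx.2]
      have h1 : HasDerivAt (fun y : ℝ => t - y) (-1) x := by
        simpa using (hasDerivAt_id x).const_sub t
      have h2 : HasDerivAt (fun y : ℝ => y ^ (-α)) (-α * (t - x) ^ (-α - 1)) (t - x) :=
        Real.hasDerivAt_rpow_const (Or.inl hxt.ne')
      have := h2.comp x h1
      rw [show α * (t - x) ^ (-α - 1) = -α * (t - x) ^ (-α - 1) * -1 by ring]
      exact this
    have hgd : ∀ x ∈ Set.uIcc (0:ℝ) s, HasDerivAt g (g' x) x := fun x _ => hg x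
    have hw'i : IntervalIntegrable (fun x => α * (t - x) ^ (-α - 1)) volume 0 s := by
      apply ContinuousOn.intervalIntegrable
      have hcont : ContinuousOn (fun x : ℝ => (t - x) ^ (-α - 1)) (Set.uIcc 0 s) := by
        apply ContinuousOn.rpow_const (continuousOn_const.sub continuousOn_id)
        intro x hx
        rw [Set.uIcc_of_le hs.1.le] at hx
        exact Or.inl (by intro h; simp at h; linarith [hx.2, hst])
      exact continuousOn_const.mul hcont
    have hg'i : IntervalIntegrable g' volume 0 s := hg'c.intervalIntegrable 0 s
    have ibp := integral_mul_deriv_eq_deriv_mul hwd hgd hw'i hg'i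
    have heq : ∀ τ, w τ * g' τ = g' τ * w τ := fun τ => mul_comm _ _
    have hFs : F s = w s * g s - w 0 * g 0
        - ∫ x in (0:ℝ)..s, (α * (t - x) ^ (-α - 1)) * g x := by
      rw [hF_def]; simp only [← heq]; exact ibp
    rw [hFs]
    have h1 : 0 ≤ w 0 * g 0 :=
      mul_nonneg (Real.rpow_nonneg (by simpa using ht.le) _) (hgnn 0)
    have h2 : 0 ≤ ∫ x in (0:ℝ)..s, (α * (t - x) ^ (-α - 1)) * g x := by
      apply intervalIntegral.integral_nonneg hs.1.le
      intro u hu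
      exact mul_nonneg (mul_nonneg hα0.le (Real.rpow_nonneg (by linarith [hu.2]) _)) (hgnn u)
    have h3 : w s * g s = g s * (t - s) ^ (-α) := mul_comm _ _
    linarith
  have hB : Tendsto (fun s => g s * (t - s) ^ (-α)) (𝓝[Ioo (0:ℝ) t] t) (𝓝 0) := by
    have hslope : Tendsto (fun s => (g s - g t) / (s - t)) (𝓝[Ioo (0:ℝ) t] t) (𝓝 0) := by
      have h0 := hasDerivAt_iff_tendsto_slope.1 (hg t)
      rw [hg't] at h0
      have h := h0.mono_left (nhdsWithin_mono t
        (fun u (hu : u ∈ Set.Ioo (0:ℝ) t) => Set.mem_compl_singleton_iff.2 (ne_of_lt hu.2)))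
      exact h.congr (fun u => by simp [slope_def_field])
    have hpow : Tendsto (fun s => -((t - s) ^ ((1:ℝ) - α))) (𝓝[Ioo (0:ℝ) t] t) (𝓝 0) := by
      have h0 : ContinuousAt (fun y : ℝ => y ^ ((1:ℝ) - α)) 0 :=
        Real.continuousAt_rpow_const 0 _ (Or.inr (by linarith))
      have h1 : Tendsto (fun s : ℝ => t - s) (𝓝[Ioo (0:ℝ) t] t) (𝓝 0) := by
        have h2 : Tendsto (fun s : ℝ => t - s) (𝓝 t) (𝓝 (t - t)) :=
          tendsto_const_nhds.sub tendsto_id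
        simpa using h2.mono_left nhdsWithin_le_nhds
      have h3 := (h0.tendsto.comp h1).neg
      simpa [Real.zero_rpow (by intro h; linarith : (1:ℝ) - α ≠ 0)] using h3
    have hmul := hslope.mul hpow
    rw [mul_zero] at hmul
    apply hmul.congr'
    filter_upwards [eventually_mem_nhdsWithin] with s hs
    have h1 : (0:ℝ) < t - s := by linarith [hs.2]
    have h2 : s - t ≠ 0 := by intro h; linarith [hs.2]
    rw [hgt, sub_zero]
    rw [show ((1:ℝ) - α) = 1 + (-α) by ring, Real.rpow_add h1, Real.rpow_one]
    field_simp
    ring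
  have hnebot : (𝓝[Ioo (0:ℝ) t] t).NeBot := right_nhdsWithin_Ioo_neBot ht
  exact le_of_tendsto_of_tendsto hFt hB
    (eventually_mem_nhdsWithin.mono (fun s hs => hbound s hs))

private lemma dot_symm' {n : ℕ} (P : Matrix (Fin n) (Fin n) ℝ) (hP : P.IsSymm)
    (a b : Fin n → ℝ) : a ⬝ᵥ P.mulVec b = b ⬝ᵥ P.mulVec a := by
  rw [dotProduct_mulVec, ← Matrix.mulVec_transpose, hP.eq, dotProduct_comm]

private lemma hasDerivAt_quad' {n : ℕ} (P : Matrix (Fin n) (Fin n) ℝ) (u : ℝ → Fin n → ℝ)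
    (u' : Fin n → ℝ) (τ : ℝ) (hu : ∀ i, HasDerivAt (fun s => u s i) (u' i) τ) :
    HasDerivAt (fun s => u s ⬝ᵥ P.mulVec (u s))
      (u' ⬝ᵥ P.mulVec (u τ) + u τ ⬝ᵥ P.mulVec u') τ := by
  have h : HasDerivAt (fun s => ∑ i, u s i * ∑ j, P i j * u s j)
      (∑ i, (u' i * ∑ j, P i j * u τ j + u τ i * ∑ j, P i j * u' j)) τ :=
    HasDerivAt.fun_sum fun i _ =>
      (hu i).mul (HasDerivAt.fun_sum fun j _ => (hu j).const_mul (P i j))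
  simpa [dotProduct, mulVec, Finset.sum_add_distrib] using h

theorem caputo_quadratic_form_le (n : ℕ) (α : ℝ) (hα : α ∈ Set.Ioo (0:ℝ) 1)
    (P : Matrix (Fin n) (Fin n) ℝ) (hPsymm : P.IsSymm) (hPpos : P.PosDef)
    (x : ℝ → Fin n → ℝ) (hx : ∀ i, ContDiff ℝ 1 (fun s => x s i)) :
    ∀ t, 0 ≤ t →
      caputo α (fun s => x s ⬝ᵥ P.mulVec (x s)) t ≤
        (fun i => caputo α (fun s => x s i) t) ⬝ᵥ P.mulVec (x t)
          + x t ⬝ᵥ P.mulVec (fun i => caputo α (fun s => x s i) t) := by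
  obtain ⟨hα0, hα1⟩ := hα
  intro t ht
  rcases eq_or_lt_of_le ht with rfl | ht
  · simp [caputo, dotProduct, mulVec]
  -- notation
  set c : ℝ := 1 / Real.Gamma (1 - α) with hc_def
  have hc : 0 < c := by
    have := Real.Gamma_pos_of_pos (show (0:ℝ) < 1 - α by linarith)
    positivity
  set w : ℝ → ℝ := fun τ => (t - τ) ^ (-α) with hw_def
  have hw : IntervalIntegrable w MeasureTheory.volume 0 t := w_integrable' hα1
  set x' : ℝ → Fin n → ℝ := fun τ i => deriv (fun s => x s i) τ with hx'_def
  have hder : ∀ τ i, HasDerivAt (fun s => x s i) (x' τ i) τ := fun τ i =>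
    ((hx i).differentiable one_ne_zero).differentiableAt.hasDerivAt
  have hx'c : ∀ i, Continuous fun τ => x' τ i := fun i => (hx i).continuous_deriv le_rfl
  have hxc : ∀ i, Continuous fun s => x s i := fun i => (hx i).continuous
  set m : Fin n → ℝ := P.mulVec (x t) with hm_def
  set A : ℝ → ℝ := fun τ => x' τ ⬝ᵥ m with hA_def
  have hAc : Continuous A := by
    simp only [hA_def, dotProduct]
    exact continuous_finset_sum _ fun i _ => (hx'c i).mul continuous_const
  set g : ℝ → ℝ := fun τ => (x τ - x t) ⬝ᵥ P.mulVec (x τ - x t) with hg_def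
  set g' : ℝ → ℝ :=
    fun τ => x' τ ⬝ᵥ P.mulVec (x τ - x t) + (x τ - x t) ⬝ᵥ P.mulVec (x' τ) with hg'_def
  have hg : ∀ τ, HasDerivAt g (g' τ) τ := fun τ =>
    hasDerivAt_quad' P (fun s => x s - x t) (x' τ) τ
      (fun i => by simpa using (hder τ i).sub_const (x t i))
  have hg'c : Continuous g' := by
    simp only [hg'_def, dotProduct, mulVec, Pi.sub_apply]
    apply Continuous.add
    · exact continuous_finset_sum _ fun i _ => (hx'c i).mul
        (continuous_finset_sum _ fun j _ => continuous_const.mul ((hxc j).sub continuous_const))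
    · exact continuous_finset_sum _ fun i _ => ((hxc i).sub continuous_const).mul
        (continuous_finset_sum _ fun j _ => continuous_const.mul (hx'c j))
  have hgnn : ∀ τ, 0 ≤ g τ := fun τ => by
    have h := hPpos.posSemidef.dotProduct_mulVec_nonneg (x τ - x t)
    rwa [star_trivial] at h
  have hgt : g t = 0 := by simp [hg_def]
  have hkey : ∫ τ in (0:ℝ)..t, g' τ * w τ ≤ 0 :=
    key_nonpos hα0 hα1 ht g g' hg hg'c hgnn hgt
  -- derivative of the quadratic form
  set q' : ℝ → ℝ := fun τ => x' τ ⬝ᵥ P.mulVec (x τ) + x τ ⬝ᵥ P.mulVec (x' τ) with hq'_def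
  have hq : ∀ τ, HasDerivAt (fun s => x s ⬝ᵥ P.mulVec (x s)) (q' τ) τ := fun τ =>
    hasDerivAt_quad' P x (x' τ) τ (hder τ)
  have hsplit : ∀ τ, q' τ = 2 * A τ + g' τ := by
    intro τ
    have hsymm := dot_symm' P hPsymm (x t) (x' τ)
    simp only [hq'_def, hg'_def, hA_def, hm_def, Matrix.mulVec_sub, dotProduct_sub,
      sub_dotProduct] at *
    linarith
  -- integrability facts
  have hA_int : IntervalIntegrable (fun τ => 2 * A τ * w τ)
      MeasureTheory.volume 0 t := hw.continuousOn_mul (continuous_const.mul hAc).continuousOn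
  have hg'_int : IntervalIntegrable (fun τ => g' τ * w τ)
      MeasureTheory.volume 0 t := hw.continuousOn_mul hg'c.continuousOn
  -- LHS
  have hLHS : caputo α (fun s => x s ⬝ᵥ P.mulVec (x s)) t =
      c * ((∫ τ in (0:ℝ)..t, 2 * A τ * w τ) + ∫ τ in (0:ℝ)..t, g' τ * w τ) := by
    rw [caputo, ← hc_def, ← intervalIntegral.integral_add hA_int hg'_int]
    congr 1
    apply intervalIntegral.integral_congr
    intro τ _
    show deriv (fun s => x s ⬝ᵥ P.mulVec (x s)) τ * w τ = _
    rw [(hq τ).deriv, hsplit τ]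
    ring
  rw [hLHS]
  -- RHS
  have hterm : (fun i => caputo α (fun s => x s i) t) ⬝ᵥ m
      = c * ∫ τ in (0:ℝ)..t, A τ * w τ := by
    have hcapi : ∀ i, caputo α (fun s => x s i) t = c * ∫ τ in (0:ℝ)..t, x' τ i * w τ :=
      fun i => rfl
    calc (fun i => caputo α (fun s => x s i) t) ⬝ᵥ m
        = ∑ i, c * ∫ τ in (0:ℝ)..t, x' τ i * w τ * m i := by
          simp only [dotProduct]
          refine Finset.sum_congr rfl fun i _ => ?_
          rw [hcapi i, mul_assoc, ← intervalIntegral.integral_mul_const]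
      _ = c * ∑ i, ∫ τ in (0:ℝ)..t, x' τ i * w τ * m i := by rw [Finset.mul_sum]
      _ = c * ∫ τ in (0:ℝ)..t, ∑ i, x' τ i * w τ * m i := by
          rw [intervalIntegral.integral_finset_sum]
          exact fun i _ => (hw.continuousOn_mul (hx'c i).continuousOn).mul_const _
      _ = c * ∫ τ in (0:ℝ)..t, A τ * w τ := by
          congr 1
          apply intervalIntegral.integral_congr
          intro τ _
          simp only [hA_def, dotProduct, Finset.sum_mul]
          exact Finset.sum_congr rfl fun i _ => by ring
  have h2' : x t ⬝ᵥ P.mulVec (fun i => caputo α (fun s => x s i) t)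
      = (fun i => caputo α (fun s => x s i) t) ⬝ᵥ m := by
    rw [hm_def]; exact dot_symm' P hPsymm (x t) _
  rw [h2', hterm]
  have h2A : (∫ τ in (0:ℝ)..t, 2 * A τ * w τ) = 2 * ∫ τ in (0:ℝ)..t, A τ * w τ := by
    rw [← intervalIntegral.integral_const_mul]
    apply intervalIntegral.integral_congr
    intro τ _
    ring
  rw [h2A]
  nlinarith [mul_nonpos_of_nonneg_of_nonpos hc.le hkey]
end
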